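/- arXiv:2102.03261 — 3 statements merged into one kernel-verified Lean document; each statement's English description precedes it below -/
import Mathlib

section
/- Let β > 0, A a finite nonempty set, x : A → ℝ, i ∈ A, and ε ≥ 0. Define F(x) = β·log(∑_a exp(x_a/β)) and let x' be x with x'_i = x_i + ε. Then ε·softmax_i(x/β) ≤ F(x') - F(x) ≤ ε·softmax_i(x'/β), and both sides are nonnegative. -/
lemma exp_mul_le_convex (p t : ℝ) (hp0 : 0 ≤ p) (hp1 : p ≤ 1) :
    Real.exp (t * p) ≤ 1 - p + p * Real.exp t := by
  have h := Real.geom_mean_le_arith_mean2_weighted hp0 (by linarith : (0:ℝ) ≤ 1 - p)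
    (Real.exp_pos t).le zero_le_one (by ring)
  rw [Real.one_rpow, mul_one, Real.rpow_def_of_pos (Real.exp_pos t), Real.log_exp] at h
  linarith

theorem logsumexp_perturb_nonneg {A : Type*} [Fintype A] [Nonempty A] [DecidableEq A]
    (β : ℝ) (hβ : 0 < β) (x : A → ℝ) (i : A) (ε : ℝ) (hε : 0 ≤ ε)
    (x' : A → ℝ) (hx' : x' = Function.update x i (x i + ε))
    (F : (A → ℝ) → ℝ) (hF : ∀ y, F y = β * Real.log (∑ a, Real.exp (y a / β)))
    (softmax : (A → ℝ) → A → ℝ)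
    (hsm : ∀ y a, softmax y a = Real.exp (y a) / ∑ b, Real.exp (y b)) :
    ε * softmax (fun a => x a / β) i ≤ F x' - F x ∧
      F x' - F x ≤ ε * softmax (fun a => x' a / β) i ∧
      0 ≤ ε * softmax (fun a => x a / β) i := by
  set t : ℝ := ε / β with ht
  have ht0 : 0 ≤ t := div_nonneg hε hβ.le
  have hxi : x' i = x i + ε := by rw [hx']; simp
  have hxa : ∀ a, a ≠ i → x' a = x a := by
    intro a ha; rw [hx']; exact Function.update_of_ne ha _ _
  set S : ℝ := ∑ a, Real.exp (x a / β) with hS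
  set S' : ℝ := ∑ a, Real.exp (x' a / β) with hS'
  set e : ℝ := Real.exp (x i / β) with he
  set e' : ℝ := Real.exp (x' i / β) with he'
  have hepos : 0 < e := Real.exp_pos _
  have he'pos : 0 < e' := Real.exp_pos _
  have hSpos : 0 < S :=
    Finset.sum_pos (fun a _ => Real.exp_pos _) Finset.univ_nonempty
  have hS'pos : 0 < S' :=
    Finset.sum_pos (fun a _ => Real.exp_pos _) Finset.univ_nonempty
  have heS : e ≤ S :=
    Finset.single_le_sum (f := fun a => Real.exp (x a / β))
      (fun a _ => (Real.exp_pos _).le) (Finset.mem_univ i)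
  have he'S : e' ≤ S' :=
    Finset.single_le_sum (f := fun a => Real.exp (x' a / β))
      (fun a _ => (Real.exp_pos _).le) (Finset.mem_univ i)
  have he'e : e' = e * Real.exp t := by
    rw [he', hxi, he, ht, add_div, Real.exp_add]
  have hkey : S' - e' = S - e := by
    rw [hS, hS', he, he', ← Finset.sum_erase_add _ _ (Finset.mem_univ i),
      ← Finset.sum_erase_add _ _ (Finset.mem_univ i)]
    have : ∑ a ∈ Finset.univ.erase i, Real.exp (x' a / β)
        = ∑ a ∈ Finset.univ.erase i, Real.exp (x a / β) :=
      Finset.sum_congr rfl fun a ha => by rw [hxa a (Finset.ne_of_mem_erase ha)]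
    rw [this]; ring
  have hβt : β * t = ε := by rw [ht]; field_simp
  have hΔ : F x' - F x = β * Real.log (S' / S) := by
    rw [hF, hF, Real.log_div hS'pos.ne' hSpos.ne']; ring
  have hsm1 : softmax (fun a => x a / β) i = e / S := by
    rw [hsm]
  have hsm2 : softmax (fun a => x' a / β) i = e' / S' := by
    rw [hsm]
  have hnonneg : 0 ≤ ε * softmax (fun a => x a / β) i := by
    rw [hsm1]; exact mul_nonneg hε (div_nonneg hepos.le hSpos.le)
  refine ⟨?_, ?_, hnonneg⟩
  · -- lower bound
    rw [hsm1, hΔ, ← hβt, mul_assoc]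
    have hp0 : 0 ≤ e / S := div_nonneg hepos.le hSpos.le
    have hp1 : e / S ≤ 1 := (div_le_one hSpos).2 heS
    have hlog : t * (e / S) ≤ Real.log (S' / S) := by
      rw [Real.le_log_iff_exp_le (div_pos hS'pos hSpos)]
      have h := exp_mul_le_convex (e / S) t hp0 hp1
      have hratio : S' / S = 1 - e / S + (e / S) * Real.exp t := by
        have : S' = S - e + e * Real.exp t := by rw [← he'e]; linarith
        rw [this]; field_simp; try ring
      rw [hratio]; exact h
    exact mul_le_mul_of_nonneg_left hlog hβ.le
  · -- upper bound
    rw [hsm2, hΔ, ← hβt, mul_assoc]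
    have hq0 : 0 ≤ e' / S' := div_nonneg he'pos.le hS'pos.le
    have hq1 : e' / S' ≤ 1 := (div_le_one hS'pos).2 he'S
    have hlog : Real.log (S' / S) ≤ t * (e' / S') := by
      rw [Real.log_le_iff_le_exp (div_pos hS'pos hSpos)]
      have h := exp_mul_le_convex (e' / S') (-t) hq0 hq1
      -- h : exp (-t * (e'/S')) ≤ 1 - e'/S' + (e'/S') * exp (-t)
      have hratio : 1 - e' / S' + (e' / S') * Real.exp (-t) = S / S' := by
        have hee : e' * Real.exp (-t) = e := by
          rw [he'e, mul_assoc, ← Real.exp_add, add_neg_cancel, Real.exp_zero, mul_one]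
        field_simp
        nlinarith [hkey, hee]
      rw [hratio] at h
      -- h : exp (-t * (e'/S')) ≤ S / S'
      have h2 : Real.exp (-t * (e' / S')) * S' ≤ S := (le_div_iff₀ hS'pos).1 h
      have h3 := mul_le_mul_of_nonneg_left h2 (Real.exp_pos (t * (e' / S'))).le
      have h4 : Real.exp (t * (e' / S')) * Real.exp (-t * (e' / S')) = 1 := by
        rw [← Real.exp_add, neg_mul, add_neg_cancel, Real.exp_zero]
      have h5 : Real.exp (t * (e' / S')) * (Real.exp (-t * (e' / S')) * S') = S' := by
        rw [← mul_assoc, h4, one_mul]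
      rw [div_le_iff₀ hSpos]
      linarith [h3, h5]
    exact mul_le_mul_of_nonneg_left hlog hβ.le
end

section
/- Let β > 0, A finite nonempty, Q_old : A → ℝ, a_k ∈ A, δ ∈ ℝ, and Q_new(a) = Q_old(a) + (if a = a_k then δ else 0). Define V(Q) = β·log(∑_a exp(Q(a)/β)) and π_Q(a) = exp(Q(a)/β)/∑_b exp(Q(b)/β). Then |V(Q_new) - V(Q_old)| ≤ max{π_{Q_old}(a_k), π_{Q_new}(a_k)}·|δ|. -/
lemma exp_convex_bound {q s : ℝ} (hq0 : 0 ≤ q) (hq1 : q ≤ 1) :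
    Real.exp (q * s) ≤ q * Real.exp s + (1 - q) := by
  have h1q : (0:ℝ) ≤ 1 - q := by linarith
  have hsum : q + (1 - q) = 1 := by ring
  have h := convexOn_exp.2 (Set.mem_univ s) (Set.mem_univ (0:ℝ)) hq0 h1q hsum
  simpa [Real.exp_zero, smul_eq_mul] using h

lemma soft_value_lower {A : Type*} [Fintype A] [Nonempty A] [DecidableEq A]
    (β : ℝ) (hβ : 0 < β) (Q : A → ℝ) (a_k : A) (δ : ℝ) :
    (Real.exp (Q a_k / β) / ∑ b, Real.exp (Q b / β)) * δ ≤
      β * Real.log (∑ a, Real.exp ((Q a + if a = a_k then δ else 0) / β))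
        - β * Real.log (∑ a, Real.exp (Q a / β)) := by
  set S := ∑ b, Real.exp (Q b / β) with hS
  have hSpos : 0 < S := Finset.sum_pos (fun b _ => Real.exp_pos _) Finset.univ_nonempty
  set e := Real.exp (Q a_k / β) with he
  have hepos : 0 < e := Real.exp_pos _
  have heS : e ≤ S := Finset.single_le_sum (f := fun b => Real.exp (Q b / β))
    (fun b _ => (Real.exp_pos _).le) (Finset.mem_univ a_k)
  set q := e / S with hq
  have hq0 : 0 ≤ q := by positivity
  have hq1 : q ≤ 1 := (div_le_one hSpos).2 heS
  set t := δ / β with ht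
  have hS' : (∑ a, Real.exp ((Q a + if a = a_k then δ else 0) / β))
      = S * (q * Real.exp t + (1 - q)) := by
    have hterm : ∀ a, Real.exp ((Q a + if a = a_k then δ else 0) / β)
        = Real.exp (Q a / β) + (if a = a_k then e * (Real.exp t - 1) else 0) := by
      intro a
      by_cases h : a = a_k
      · rw [h, if_pos rfl, if_pos rfl, he, ht, add_div, Real.exp_add]
        ring
      · simp [h]
    rw [Finset.sum_congr rfl (fun a _ => hterm a), Finset.sum_add_distrib,
        Finset.sum_ite_eq' Finset.univ a_k]
    simp only [Finset.mem_univ, if_pos, hq]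
    field_simp
    rw [← hS]; ring
  have hconv : Real.exp (q * t) ≤ q * Real.exp t + (1 - q) := exp_convex_bound hq0 hq1
  have hpos2 : (0:ℝ) < q * Real.exp t + (1 - q) := lt_of_lt_of_le (Real.exp_pos _) hconv
  rw [hS', Real.log_mul (ne_of_gt hSpos) (ne_of_gt hpos2)]
  have hlog : q * t ≤ Real.log (q * Real.exp t + (1 - q)) := by
    calc q * t = Real.log (Real.exp (q * t)) := (Real.log_exp _).symm
    _ ≤ Real.log (q * Real.exp t + (1 - q)) := Real.log_le_log (Real.exp_pos _) hconv
  have : q * δ = β * (q * t) := by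
    rw [ht]; field_simp
  nlinarith [mul_le_mul_of_nonneg_left hlog (le_of_lt hβ)]

theorem soft_evb_upper_bound {A : Type*} [Fintype A] [Nonempty A] [DecidableEq A]
    (β : ℝ) (hβ : 0 < β) (Q_old : A → ℝ) (a_k : A) (δ : ℝ)
    (Q_new : A → ℝ) (hQ : ∀ a, Q_new a = Q_old a + (if a = a_k then δ else 0))
    (V : (A → ℝ) → ℝ) (hV : ∀ Q, V Q = β * Real.log (∑ a, Real.exp (Q a / β)))
    (π : (A → ℝ) → A → ℝ)
    (hπ : ∀ Q a, π Q a = Real.exp (Q a / β) / ∑ b, Real.exp (Q b / β)) :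
    |V Q_new - V Q_old| ≤ max (π Q_old a_k) (π Q_new a_k) * |δ| := by
  have hQold : ∀ a, Q_old a = Q_new a + (if a = a_k then -δ else 0) := by
    intro a; rw [hQ a]; by_cases h : a = a_k <;> simp [h]
  have hlow : π Q_old a_k * δ ≤ V Q_new - V Q_old := by
    have h := soft_value_lower β hβ Q_old a_k δ
    rw [hV, hV, hπ]
    have : (∑ a, Real.exp (Q_new a / β))
        = ∑ a, Real.exp ((Q_old a + if a = a_k then δ else 0) / β) :=
      Finset.sum_congr rfl (fun a _ => by rw [hQ a])
    rw [this]; exact h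
  have hhigh : π Q_new a_k * (-δ) ≤ V Q_old - V Q_new := by
    have h := soft_value_lower β hβ Q_new a_k (-δ)
    rw [hV, hV, hπ]
    have : (∑ a, Real.exp (Q_old a / β))
        = ∑ a, Real.exp ((Q_new a + if a = a_k then -δ else 0) / β) :=
      Finset.sum_congr rfl (fun a _ => by rw [hQold a])
    rw [this]; exact h
  have hp0 : 0 ≤ π Q_old a_k := by
    rw [hπ]
    have hSpos : 0 < ∑ b, Real.exp (Q_old b / β) :=
      Finset.sum_pos (fun b _ => Real.exp_pos _) Finset.univ_nonempty
    exact div_nonneg (Real.exp_pos _).le hSpos.le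
  have hp0' : 0 ≤ π Q_new a_k := by
    rw [hπ]
    have hSpos : 0 < ∑ b, Real.exp (Q_new b / β) :=
      Finset.sum_pos (fun b _ => Real.exp_pos _) Finset.univ_nonempty
    exact div_nonneg (Real.exp_pos _).le hSpos.le
  set M := max (π Q_old a_k) (π Q_new a_k) with hM
  have hpM : π Q_old a_k ≤ M := le_max_left _ _
  have hp'M : π Q_new a_k ≤ M := le_max_right _ _
  have habs : δ ≤ |δ| := le_abs_self δ
  have habs' : -δ ≤ |δ| := neg_le_abs δ
  rw [abs_le]
  constructor
  · nlinarith [mul_le_mul_of_nonneg_left habs' hp0, mul_le_mul_of_nonneg_right hpM (abs_nonneg δ)]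
  · nlinarith [mul_le_mul_of_nonneg_left habs hp0', mul_le_mul_of_nonneg_right hp'M (abs_nonneg δ)]
end

section
/- Let β > 0, A finite nonempty, Q_old : A → ℝ, a_k ∈ A, δ ∈ ℝ, and Q_new(a) = Q_old(a) + (if a = a_k then δ else 0). Define V(Q) = β·log(∑_a exp(Q(a)/β)) and π_Q(a) = exp(Q(a)/β)/∑_b exp(Q(b)/β). Then |V(Q_new) - V(Q_old)| ≥ min{π_{Q_old}(a_k), π_{Q_new}(a_k)}·|δ|. -/
open Finset

lemma exp_convex_bound_s11 {p x : ℝ} (hp0 : 0 ≤ p) (hp1 : p ≤ 1) :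
    Real.exp (p * x) ≤ 1 + p * (Real.exp x - 1) := by
  have h := convexOn_exp.2 (Set.mem_univ (0:ℝ)) (Set.mem_univ x)
    (by linarith : (0:ℝ) ≤ 1 - p) hp0 (by ring)
  have : (1 - p) • (0:ℝ) + p • x = p * x := by simp
  rw [this] at h
  calc Real.exp (p * x) ≤ (1 - p) • Real.exp 0 + p • Real.exp x := h
    _ = 1 + p * (Real.exp x - 1) := by simp [smul_eq_mul, Real.exp_zero]; ring

lemma aux_step {A : Type*} [Fintype A] [Nonempty A] [DecidableEq A]
    (β : ℝ) (hβ : 0 < β) (Q : A → ℝ) (a_k : A) (δ : ℝ) (hδ : 0 ≤ δ) :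
    (Real.exp (Q a_k / β) / ∑ b, Real.exp (Q b / β)) * δ ≤
      β * Real.log (∑ a, Real.exp ((Q a + if a = a_k then δ else 0) / β))
        - β * Real.log (∑ a, Real.exp (Q a / β)) := by
  set S : ℝ := ∑ b, Real.exp (Q b / β) with hS
  have hSpos : 0 < S := Finset.sum_pos (fun b _ => Real.exp_pos _) Finset.univ_nonempty
  set E : ℝ := Real.exp (Q a_k / β) with hE
  set p : ℝ := E / S with hp
  have hp0 : 0 ≤ p := div_nonneg (Real.exp_pos _).le hSpos.le
  have hES : E ≤ S := Finset.single_le_sum (f := fun b => Real.exp (Q b / β)) (fun b _ => (Real.exp_pos _).le) (Finset.mem_univ a_k)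
  have hp1 : p ≤ 1 := (div_le_one hSpos).2 hES
  set x : ℝ := δ / β with hx
  have hsum : ∑ a, Real.exp ((Q a + if a = a_k then δ else 0) / β)
      = S + E * (Real.exp x - 1) := by
    have key : ∀ a : A, Real.exp ((Q a + if a = a_k then δ else 0) / β)
        = Real.exp (Q a / β) + (if a = a_k then E * (Real.exp x - 1) else 0) := by
      intro a
      by_cases h : a = a_k
      · rw [h, if_pos rfl, if_pos rfl, add_div, Real.exp_add, hE, hx]
        ring
      · simp [h]
    rw [Finset.sum_congr rfl fun a _ => key a, Finset.sum_add_distrib,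
      Finset.sum_ite_eq' Finset.univ a_k, if_pos (Finset.mem_univ a_k)]
  have hEq : S + E * (Real.exp x - 1) = S * (1 + p * (Real.exp x - 1)) := by
    rw [hp]; field_simp
  have hposD : 0 < 1 + p * (Real.exp x - 1) :=
    lt_of_lt_of_le (Real.exp_pos _) (exp_convex_bound_s11 hp0 hp1)
  have hlog : p * x ≤ Real.log (1 + p * (Real.exp x - 1)) :=
    (Real.le_log_iff_exp_le hposD).2 (exp_convex_bound_s11 hp0 hp1)
  have hlogsum : Real.log (∑ a, Real.exp ((Q a + if a = a_k then δ else 0) / β))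
      = Real.log S + Real.log (1 + p * (Real.exp x - 1)) := by
    rw [hsum, hEq, Real.log_mul hSpos.ne' hposD.ne']
  rw [hlogsum]
  have : p * δ = β * (p * x) := by
    rw [hx]; field_simp
  calc p * δ = β * (p * x) := this
    _ ≤ β * Real.log (1 + p * (Real.exp x - 1)) :=
        mul_le_mul_of_nonneg_left hlog hβ.le
    _ = β * (Real.log S + Real.log (1 + p * (Real.exp x - 1))) - β * Real.log S := by ring

theorem soft_evb_lower_bound {A : Type*} [Fintype A] [Nonempty A] [DecidableEq A]
    (β : ℝ) (hβ : 0 < β) (Q_old : A → ℝ) (a_k : A) (δ : ℝ)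
    (Q_new : A → ℝ) (hQ : ∀ a, Q_new a = Q_old a + (if a = a_k then δ else 0))
    (V : (A → ℝ) → ℝ) (hV : ∀ Q, V Q = β * Real.log (∑ a, Real.exp (Q a / β)))
    (π : (A → ℝ) → A → ℝ)
    (hπ : ∀ Q a, π Q a = Real.exp (Q a / β) / ∑ b, Real.exp (Q b / β)) :
    min (π Q_old a_k) (π Q_new a_k) * |δ| ≤ |V Q_new - V Q_old| := by
  have hQn : Q_new = fun a => Q_old a + (if a = a_k then δ else 0) := funext hQ
  rcases le_or_gt 0 δ with hδ | hδ
  · -- δ ≥ 0 : use aux with Q_old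
    have h := aux_step β hβ Q_old a_k δ hδ
    have hmin : min (π Q_old a_k) (π Q_new a_k) ≤ π Q_old a_k := min_le_left _ _
    have hπnn : 0 ≤ π Q_old a_k := by
      rw [hπ]
      exact div_nonneg (Real.exp_pos _).le
        (Finset.sum_nonneg fun b _ => (Real.exp_pos _).le)
    have hVd : π Q_old a_k * δ ≤ V Q_new - V Q_old := by
      rw [hV, hV, hπ, hQn]; exact h
    have : min (π Q_old a_k) (π Q_new a_k) * |δ| ≤ V Q_new - V Q_old := by
      rw [abs_of_nonneg hδ]
      exact le_trans (mul_le_mul_of_nonneg_right hmin hδ) hVd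
    exact this.trans (le_abs_self _)
  · -- δ < 0 : use aux with Q_new and -δ
    have h := aux_step β hβ Q_new a_k (-δ) (by linarith)
    have hback : (fun a => Q_new a + (if a = a_k then -δ else 0)) = Q_old := by
      funext a; rw [hQ a]; by_cases ha : a = a_k <;> simp [ha]
    have hVd : π Q_new a_k * (-δ) ≤ V Q_old - V Q_new := by
      rw [hV, hV, hπ, ← hback]; exact h
    have hmin : min (π Q_old a_k) (π Q_new a_k) ≤ π Q_new a_k := min_le_right _ _
    have : min (π Q_old a_k) (π Q_new a_k) * |δ| ≤ V Q_old - V Q_new := by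
      rw [abs_of_neg hδ]
      exact le_trans (mul_le_mul_of_nonneg_right hmin (by linarith)) hVd
    calc min (π Q_old a_k) (π Q_new a_k) * |δ| ≤ V Q_old - V Q_new := this
      _ ≤ |V Q_old - V Q_new| := le_abs_self _
      _ = |V Q_new - V Q_old| := abs_sub_comm _ _
end
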